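/- Let K > 0, C, A, B, a₁ ≠ 0, a₂ be real constants with A and B not both zero, and set ε* := 2π e^C/(A² + B²). Let Φ : ℝ → ℝ be a twice continuously differentiable function satisfying Φ''(s) = ε* e^{-Φ(s)/K} for all s. Define a(t) := a₁ + a₂ t, ρ(t,x,y) := (1/a(t)²) e^{-Φ((Ax+By)/a(t))/K + C}, u(t,x,y) := (a'(t)/a(t))·(x,y), and the potential φ(t,x,y) := Φ((Ax+By)/a(t)). Then at every point (t,x,y) with a(t) ≠ 0, these functions satisfy the 2-dimensional isothermal Euler–Poisson equations: the continuity equation ∂ρ/∂t + ∇·(ρu) = 0, the momentum equations ρ(∂u/∂t + (u·∇)u) + K∇ρ = -ρ∇φ, and the Poisson equation Δφ = 2πρ (with the spatial gradient and Laplacian taken in (x,y)). -/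

import Mathlib

set_option maxHeartbeats 1000000 in
/-- The separable ansatz `ρ, u, φ` built from a solution `Φ` of
`Φ'' = ε* e^{-Φ/K}` and the linear scaling `a(t) = a₁ + a₂ t` satisfies the
2-dimensional isothermal Euler–Poisson equations (continuity, both momentum
components, and the Poisson equation) at every point where `a(t) ≠ 0`. -/
theorem euler_poisson_separable_solution
    (K C A B a₁ a₂ : ℝ) (hK : 0 < K) (ha₁ : a₁ ≠ 0)
    (hAB : ¬(A = 0 ∧ B = 0))
    (ε : ℝ) (hε : ε = 2 * Real.pi * Real.exp C / (A ^ 2 + B ^ 2))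
    (Φ : ℝ → ℝ) (hΦ : ContDiff ℝ 2 Φ)
    (hODE : ∀ s : ℝ, deriv (deriv Φ) s = ε * Real.exp (-Φ s / K))
    (a : ℝ → ℝ) (ha : a = fun t => a₁ + a₂ * t)
    (ρ : ℝ → ℝ → ℝ → ℝ)
    (hρ : ρ = fun t x y =>
      (1 / (a t) ^ 2) * Real.exp (-Φ ((A * x + B * y) / a t) / K + C))
    (u₁ u₂ : ℝ → ℝ → ℝ → ℝ)
    (hu₁ : u₁ = fun t x y => (deriv a t / a t) * x)
    (hu₂ : u₂ = fun t x y => (deriv a t / a t) * y)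
    (φ : ℝ → ℝ → ℝ → ℝ)
    (hφ : φ = fun t x y => Φ ((A * x + B * y) / a t)) :
    ∀ t x y : ℝ, a t ≠ 0 →
      -- continuity equation: ρ_t + ∂_x(ρ u₁) + ∂_y(ρ u₂) = 0
      (deriv (fun t' => ρ t' x y) t
        + deriv (fun x' => ρ t x' y * u₁ t x' y) x
        + deriv (fun y' => ρ t x y' * u₂ t x y') y = 0)
      ∧
      -- x-momentum equation
      (ρ t x y * (deriv (fun t' => u₁ t' x y) t
          + u₁ t x y * deriv (fun x' => u₁ t x' y) x
          + u₂ t x y * deriv (fun y' => u₁ t x y') y)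
        + K * deriv (fun x' => ρ t x' y) x
        = -(ρ t x y * deriv (fun x' => φ t x' y) x))
      ∧
      -- y-momentum equation
      (ρ t x y * (deriv (fun t' => u₂ t' x y) t
          + u₁ t x y * deriv (fun x' => u₂ t x' y) x
          + u₂ t x y * deriv (fun y' => u₂ t x y') y)
        + K * deriv (fun y' => ρ t x y') y
        = -(ρ t x y * deriv (fun y' => φ t x y') y))
      ∧
      -- Poisson equation: Δφ = 2πρ
      (deriv (fun x' => deriv (fun x'' => φ t x'' y) x') x
        + deriv (fun y' => deriv (fun y'' => φ t x y'') y') y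
        = 2 * Real.pi * ρ t x y) := by
  have hΦd : Differentiable ℝ Φ := hΦ.differentiable (by norm_num)
  have hΦ'd : Differentiable ℝ (deriv Φ) := by
    have h2 : ContDiff ℝ ((1:ℕ∞) + 1) Φ := by exact_mod_cast hΦ
    exact (contDiff_succ_iff_deriv.mp h2).2.2.differentiable (by simp)
  have hat : ∀ t : ℝ, HasDerivAt a a₂ t := by
    intro t
    rw [ha]
    simpa using ((hasDerivAt_id t).const_mul a₂).const_add a₁
  have hda : deriv a = fun _ => a₂ := funext fun t => (hat t).deriv
  have hAB2 : A ^ 2 + B ^ 2 ≠ 0 := by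
    intro h
    apply hAB
    have hA : A ^ 2 = 0 := by nlinarith [sq_nonneg A, sq_nonneg B]
    have hB : B ^ 2 = 0 := by nlinarith [sq_nonneg A, sq_nonneg B]
    exact ⟨(pow_eq_zero_iff (by norm_num)).mp hA, (pow_eq_zero_iff (by norm_num)).mp hB⟩
  subst hρ hu₁ hu₂ hφ
  intro t x y hb
  simp only [hda]
  set s : ℝ := (A * x + B * y) / a t with hsdef
  set P : ℝ := deriv Φ s with hPdef
  set E : ℝ := Real.exp (-Φ s / K + C) with hEdef
  -- spatial derivative of the linear phase
  have hsx : ∀ x' : ℝ, HasDerivAt (fun x'' : ℝ => (A * x'' + B * y) / a t) (A / a t) x' := by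
    intro x'
    simpa using (((hasDerivAt_id x').const_mul A).add_const (B * y)).div_const (a t)
  have hsy : ∀ y' : ℝ, HasDerivAt (fun y'' : ℝ => (A * x + B * y'') / a t) (B / a t) y' := by
    intro y'
    simpa using (((hasDerivAt_id y').const_mul B).const_add (A * x)).div_const (a t)
  have hΦx : ∀ x' : ℝ, HasDerivAt (fun x'' : ℝ => Φ ((A * x'' + B * y) / a t))
      (deriv Φ ((A * x' + B * y) / a t) * (A / a t)) x' :=
    fun x' => ((hΦd _).hasDerivAt).comp x' (hsx x')
  have hΦy : ∀ y' : ℝ, HasDerivAt (fun y'' : ℝ => Φ ((A * x + B * y'') / a t))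
      (deriv Φ ((A * x + B * y') / a t) * (B / a t)) y' :=
    fun y' => ((hΦd _).hasDerivAt).comp y' (hsy y')
  -- spatial derivatives of ρ
  have hρx : HasDerivAt (fun x' : ℝ => 1 / a t ^ 2 * Real.exp (-Φ ((A * x' + B * y) / a t) / K + C))
      (1 / a t ^ 2 * (E * (-(P * (A / a t)) / K))) x :=
    ((((hΦx x).neg.div_const K).add_const C).exp).const_mul (1 / a t ^ 2)
  have hρy : HasDerivAt (fun y' : ℝ => 1 / a t ^ 2 * Real.exp (-Φ ((A * x + B * y') / a t) / K + C))
      (1 / a t ^ 2 * (E * (-(P * (B / a t)) / K))) y :=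
    ((((hΦy y).neg.div_const K).add_const C).exp).const_mul (1 / a t ^ 2)
  have e7 : deriv (fun x' : ℝ => 1 / a t ^ 2 * Real.exp (-Φ ((A * x' + B * y) / a t) / K + C)) x
      = 1 / a t ^ 2 * (E * (-(P * (A / a t)) / K)) := hρx.deriv
  have e7y : deriv (fun y' : ℝ => 1 / a t ^ 2 * Real.exp (-Φ ((A * x + B * y') / a t) / K + C)) y
      = 1 / a t ^ 2 * (E * (-(P * (B / a t)) / K)) := hρy.deriv
  -- time derivative of ρ
  have e1 : deriv (fun t' : ℝ => 1 / a t' ^ 2 * Real.exp (-Φ ((A * x + B * y) / a t') / K + C)) t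
      = E * (-2 * a₂ / a t ^ 3 + P * (A * x + B * y) * a₂ / (K * a t ^ 4)) := by
    have h0 := ((hasDerivAt_const t (1:ℝ)).div ((hat t).pow 2) (pow_ne_zero 2 hb)).mul
      (((((hΦd _).hasDerivAt.comp t
        ((hasDerivAt_const t (A * x + B * y)).div (hat t) hb)).neg.div_const K).add_const C).exp)
    have h1 : HasDerivAt (fun t' : ℝ => 1 / a t' ^ 2 * Real.exp (-Φ ((A * x + B * y) / a t') / K + C))
        (E * (-2 * a₂ / a t ^ 3 + P * (A * x + B * y) * a₂ / (K * a t ^ 4))) t := by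
      refine h0.congr_deriv ?_
      rw [hEdef, hPdef, hsdef]
      simp only [Pi.div_apply, Pi.pow_apply, Pi.neg_apply, Function.comp_apply, Nat.reduceSub, pow_one]
      push_cast
      field_simp
      ring
    exact h1.deriv
  -- spatial flux derivatives (continuity)
  have e2 : deriv (fun x' : ℝ => 1 / a t ^ 2 * Real.exp (-Φ ((A * x' + B * y) / a t) / K + C) * (a₂ / a t * x')) x
      = 1 / a t ^ 2 * (E * (-(P * (A / a t)) / K)) * (a₂ / a t * x) + 1 / a t ^ 2 * E * (a₂ / a t) := by
    have h0 := hρx.mul ((hasDerivAt_id x).const_mul (a₂ / a t))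
    have h1 : HasDerivAt (fun x' : ℝ => 1 / a t ^ 2 * Real.exp (-Φ ((A * x' + B * y) / a t) / K + C) * (a₂ / a t * x'))
        (1 / a t ^ 2 * (E * (-(P * (A / a t)) / K)) * (a₂ / a t * x) + 1 / a t ^ 2 * E * (a₂ / a t)) x := by
      refine h0.congr_deriv ?_
      simp only [id_eq]
      rw [hEdef, hPdef, hsdef]
      ring
    exact h1.deriv
  have e3 : deriv (fun y' : ℝ => 1 / a t ^ 2 * Real.exp (-Φ ((A * x + B * y') / a t) / K + C) * (a₂ / a t * y')) y
      = 1 / a t ^ 2 * (E * (-(P * (B / a t)) / K)) * (a₂ / a t * y) + 1 / a t ^ 2 * E * (a₂ / a t) := by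
    have h0 := hρy.mul ((hasDerivAt_id y).const_mul (a₂ / a t))
    have h1 : HasDerivAt (fun y' : ℝ => 1 / a t ^ 2 * Real.exp (-Φ ((A * x + B * y') / a t) / K + C) * (a₂ / a t * y'))
        (1 / a t ^ 2 * (E * (-(P * (B / a t)) / K)) * (a₂ / a t * y) + 1 / a t ^ 2 * E * (a₂ / a t)) y := by
      refine h0.congr_deriv ?_
      simp only [id_eq]
      rw [hEdef, hPdef, hsdef]
      ring
    exact h1.deriv
  -- velocity derivatives
  have e4x : deriv (fun t' : ℝ => a₂ / a t' * x) t = -(a₂ ^ 2) / a t ^ 2 * x := by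
    have h0 := ((hasDerivAt_const t a₂).div (hat t) hb).mul_const x
    have h1 : HasDerivAt (fun t' : ℝ => a₂ / a t' * x) (-(a₂ ^ 2) / a t ^ 2 * x) t := by
      refine h0.congr_deriv ?_
      ring
    exact h1.deriv
  have e4y : deriv (fun t' : ℝ => a₂ / a t' * y) t = -(a₂ ^ 2) / a t ^ 2 * y := by
    have h0 := ((hasDerivAt_const t a₂).div (hat t) hb).mul_const y
    have h1 : HasDerivAt (fun t' : ℝ => a₂ / a t' * y) (-(a₂ ^ 2) / a t ^ 2 * y) t := by
      refine h0.congr_deriv ?_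
      ring
    exact h1.deriv
  have e5x : deriv (fun x' : ℝ => a₂ / a t * x') x = a₂ / a t := by
    simpa using ((hasDerivAt_id x).const_mul (a₂ / a t)).deriv
  have e5y : deriv (fun y' : ℝ => a₂ / a t * y') y = a₂ / a t := by
    simpa using ((hasDerivAt_id y).const_mul (a₂ / a t)).deriv
  -- potential spatial derivatives
  have e8x : deriv (fun x' : ℝ => Φ ((A * x' + B * y) / a t)) x = P * (A / a t) := (hΦx x).deriv
  have e8y : deriv (fun y' : ℝ => Φ ((A * x + B * y') / a t)) y = P * (B / a t) := (hΦy y).deriv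
  -- second derivatives of potential
  have hinx : (fun x' : ℝ => deriv (fun x'' : ℝ => Φ ((A * x'' + B * y) / a t)) x')
      = fun x' : ℝ => deriv Φ ((A * x' + B * y) / a t) * (A / a t) := funext fun x' => (hΦx x').deriv
  have hiny : (fun y' : ℝ => deriv (fun y'' : ℝ => Φ ((A * x + B * y'') / a t)) y')
      = fun y' : ℝ => deriv Φ ((A * x + B * y') / a t) * (B / a t) := funext fun y' => (hΦy y').deriv
  have e9x : deriv (fun x' : ℝ => deriv Φ ((A * x' + B * y) / a t) * (A / a t)) x
      = deriv (deriv Φ) s * (A / a t) * (A / a t) :=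
    (((hΦ'd _).hasDerivAt.comp x (hsx x)).mul_const (A / a t)).deriv
  have e9y : deriv (fun y' : ℝ => deriv Φ ((A * x + B * y') / a t) * (B / a t)) y
      = deriv (deriv Φ) s * (B / a t) * (B / a t) :=
    (((hΦ'd _).hasDerivAt.comp y (hsy y)).mul_const (B / a t)).deriv
  clear_value s P E
  refine ⟨?_, ?_, ?_, ?_⟩
  · rw [e1, e2, e3]
    field_simp
    ring
  · rw [e4x, e5x, e7, e8x, deriv_const]
    field_simp
    ring
  · rw [e4y, e5y, e7y, e8y, deriv_const]
    field_simp
    ring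
  · rw [hinx, hiny, e9x, e9y, hODE, hε, hEdef, Real.exp_add]
    field_simp
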